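/- Let (P_t)_{t≥0} be a semigroup of positive linear operators on bounded measurable functions with P_t 1 ≤ e^{At} for some A, and suppose there exist a bounded positive function Θ₀, a finite positive measure μ₀ with ∫Θ₀ dμ₀ = 1, and constants λ₁ > λ₀, H > 0 such that ‖e^{λ₀ t} P_t g − Θ₀ ∫ g dμ₀‖_∞ ≤ H ‖g‖_∞ e^{−(λ₁−λ₀)t} for all bounded g. Then for every bounded measurable φ and x with Θ₀(x) > 0, lim_{t→∞} P_t φ(x) / P_t 1(x) = ∫ φ dμ₀ / ∫ 1 dμ₀. -/

import Mathlib

open MeasureTheory Filter Real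

private lemma tendsto_of_abs_sub_le (f b : ℝ → ℝ) (L : ℝ)
    (hb : Filter.Tendsto b Filter.atTop (nhds 0))
    (h : ∀ᶠ t in Filter.atTop, |f t - L| ≤ b t) :
    Filter.Tendsto f Filter.atTop (nhds L) := by
  rw [tendsto_iff_dist_tendsto_zero]
  apply squeeze_zero' (Filter.Eventually.of_forall fun t => dist_nonneg) _ hb
  simpa [Real.dist_eq] using h

private lemma exp_bound_tendsto (H C c : ℝ) (hc : 0 < c) :
    Filter.Tendsto (fun t : ℝ => H * C * Real.exp (-c * t)) Filter.atTop (nhds 0) := by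
  have h1 : Filter.Tendsto (fun t : ℝ => -c * t) Filter.atTop Filter.atBot := by
    apply Filter.Tendsto.const_mul_atTop_of_neg (by linarith) Filter.tendsto_id
  have h2 := Real.tendsto_exp_atBot.comp h1
  have := h2.const_mul (H * C)
  simpa using this

/-- Ratio limit for a positive semigroup with a spectral gap: under the stated hypotheses,
`P_t φ(x) / P_t 1(x) → ∫ φ dμ₀ / μ₀(ℝ)` as `t → ∞`, at every `x` with `Θ₀(x) > 0`. -/
theorem ratio_limit_semigroup
    (P : ℝ → (ℝ → ℝ) → (ℝ → ℝ))
    (hsg : ∀ s t : ℝ, 0 ≤ s → 0 ≤ t → ∀ f : ℝ → ℝ, P (s + t) f = P s (P t f))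
    (hlin : ∀ t : ℝ, 0 ≤ t → ∀ (c : ℝ) (f g : ℝ → ℝ),
      P t (fun x => c * f x + g x) = fun x => c * P t f x + P t g x)
    (hpos : ∀ t : ℝ, 0 ≤ t → ∀ f : ℝ → ℝ, (∀ x, 0 ≤ f x) → ∀ x, 0 ≤ P t f x)
    (A : ℝ) (hP1 : ∀ t : ℝ, 0 ≤ t → ∀ x, P t (fun _ => 1) x ≤ Real.exp (A * t))
    (Θ₀ : ℝ → ℝ) (hΘpos : ∀ x, 0 < Θ₀ x) (hΘbdd : ∃ Cb, ∀ x, Θ₀ x ≤ Cb)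
    (μ₀ : Measure ℝ) [IsFiniteMeasure μ₀] (hμ₀ : μ₀ ≠ 0)
    (hΘint : ∫ y, Θ₀ y ∂μ₀ = 1)
    (lam₀ lam₁ H : ℝ) (hlam : lam₀ < lam₁) (hH : 0 < H)
    (hgap : ∀ g : ℝ → ℝ, Measurable g → ∀ Cg : ℝ, (∀ x, |g x| ≤ Cg) →
      ∀ t : ℝ, 0 ≤ t → ∀ x,
        |Real.exp (lam₀ * t) * P t g x - Θ₀ x * ∫ y, g y ∂μ₀| ≤
          H * Cg * Real.exp (-(lam₁ - lam₀) * t)) :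
    ∀ φ : ℝ → ℝ, Measurable φ → (∃ C, ∀ x, |φ x| ≤ C) → ∀ x : ℝ,
      Tendsto (fun t => P t φ x / P t (fun _ => 1) x) atTop
        (nhds ((∫ y, φ y ∂μ₀) / (μ₀ Set.univ).toReal)) := by
  intro φ hφm ⟨C, hC⟩ x
  have hc : 0 < lam₁ - lam₀ := by linarith
  have hΘx := hΘpos x
  -- numerator
  have hnum : Tendsto (fun t => Real.exp (lam₀ * t) * P t φ x) atTop
      (nhds (Θ₀ x * ∫ y, φ y ∂μ₀)) := by
    apply tendsto_of_abs_sub_le _ (fun t => H * C * Real.exp (-(lam₁ - lam₀) * t)) _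
      (exp_bound_tendsto H C _ hc)
    filter_upwards [eventually_ge_atTop (0 : ℝ)] with t ht
    exact hgap φ hφm C hC t ht x
  -- integral of 1
  have hint1 : (∫ y, (1 : ℝ) ∂μ₀) = (μ₀ Set.univ).toReal := by
    simp
    rfl
  -- denominator
  have hden : Tendsto (fun t => Real.exp (lam₀ * t) * P t (fun _ => 1) x) atTop
      (nhds (Θ₀ x * (μ₀ Set.univ).toReal)) := by
    apply tendsto_of_abs_sub_le _ (fun t => H * 1 * Real.exp (-(lam₁ - lam₀) * t)) _
      (exp_bound_tendsto H 1 _ hc)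
    filter_upwards [eventually_ge_atTop (0 : ℝ)] with t ht
    have := hgap (fun _ => 1) measurable_const 1 (fun _ => by norm_num) t ht x
    simpa [hint1] using this
  have hμpos : 0 < (μ₀ Set.univ).toReal := by
    apply ENNReal.toReal_pos
    · simpa [Measure.measure_univ_eq_zero] using hμ₀
    · exact measure_ne_top μ₀ _
  have hdne : Θ₀ x * (μ₀ Set.univ).toReal ≠ 0 := by positivity
  have hdiv := hnum.div hden hdne
  have heq : (Θ₀ x * ∫ y, φ y ∂μ₀) / (Θ₀ x * (μ₀ Set.univ).toReal)
      = (∫ y, φ y ∂μ₀) / (μ₀ Set.univ).toReal :=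
    mul_div_mul_left _ _ (ne_of_gt hΘx)
  rw [heq] at hdiv
  apply hdiv.congr
  intro t
  exact mul_div_mul_left _ _ (Real.exp_ne_zero _)
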